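/- Consider a variable-length block code with message set M = M₁ × ⋯ × M_ℓ on a DMC with minimum transition probability λ > 0, P(τ < ∞) = 1. For each i, the probability P_e(i) := P((M̂₁,…,M̂_i) ≠ (M₁,…,M_i)) satisfies P_e(i) ≥ ((|M^i|−1)/|M^i|) · E[(λ/(1−λ))^τ], where |M^i| = |M₁|⋯|M_i|. Consequently every P_e(i) is strictly positive. -/

import Mathlib

open scoped BigOperators

noncomputable section

/-- Likelihood of an output history (stored in reverse chronological order: head is the most
recent output) given the message `m`, for a variable-length feedback code with encoder
`enc` (mapping the message and the past outputs to the next channel input) over the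
channel `W`. -/
def lik {X Y Msg : Type*} (W : X → Y → ℝ) (enc : Msg → List Y → X) (m : Msg) :
    List Y → ℝ
  | [] => 1
  | y :: ys => lik W enc m ys * W (enc m ys) y

theorem pow_le_lik {X Y Msg : Type*} {W : X → Y → ℝ} {enc : Msg → List Y → X} {m : Msg}
    {lam : ℝ} (hlam : 0 ≤ lam) (hlow : ∀ x y, lam ≤ W x y) :
    ∀ ys : List Y, lam ^ ys.length ≤ lik W enc m ys
  | [] => by simp [lik]
  | y :: ys => by
      simp only [lik, List.length_cons, pow_succ]
      exact mul_le_mul (pow_le_lik hlam hlow ys) (hlow _ _) hlam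
        (le_trans (by positivity) (pow_le_lik hlam hlow ys))

theorem lik_nonneg {X Y Msg : Type*} {W : X → Y → ℝ} {enc : Msg → List Y → X} {m : Msg}
    {lam : ℝ} (hlam : 0 ≤ lam) (hlow : ∀ x y, lam ≤ W x y) (ys : List Y) :
    0 ≤ lik W enc m ys :=
  le_trans (by positivity) (pow_le_lik hlam hlow ys)

theorem lik_le_pow {X Y Msg : Type*} {W : X → Y → ℝ} {enc : Msg → List Y → X} {m : Msg}
    {lam B : ℝ} (hlam : 0 ≤ lam) (hlow : ∀ x y, lam ≤ W x y) (hB : 0 ≤ B)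
    (hup : ∀ x y, W x y ≤ B) :
    ∀ ys : List Y, lik W enc m ys ≤ B ^ ys.length
  | [] => by simp [lik]
  | y :: ys => by
      simp only [lik, List.length_cons, pow_succ]
      exact mul_le_mul (lik_le_pow hlam hlow hB hup ys) (hup _ _)
        (le_trans hlam (hlow _ _)) (by positivity)

theorem alg_aux {Ni K A G rn b L : ℝ} (hNi : 1 ≤ Ni) (hK : 0 ≤ K) (hA0 : 0 ≤ A)
    (hG0 : 0 ≤ G) (h1 : (Ni * K - K) * L ≤ A) (h2 : G ≤ K * b) (h3 : rn * b = L)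
    (h4 : rn ≤ 1) (h5 : 0 ≤ rn) :
    ((Ni - 1) / Ni) * rn * (G + A) ≤ A := by
  rw [div_mul_eq_mul_div, div_mul_eq_mul_div, div_le_iff₀ (by linarith : (0:ℝ) < Ni)]
  have k1 : rn * G ≤ K * L := by
    calc rn * G ≤ rn * (K * b) := by
          exact mul_le_mul_of_nonneg_left h2 h5
      _ = K * (rn * b) := by ring
      _ = K * L := by rw [h3]
  have k2 : (Ni - 1) * (K * L) ≤ A := by
    calc (Ni - 1) * (K * L) = (Ni * K - K) * L := by ring
      _ ≤ A := h1
  have k3 : (Ni - 1) * (rn * G) ≤ A :=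
    le_trans (mul_le_mul_of_nonneg_left k1 (by linarith)) k2
  have k4 : (Ni - 1) * (rn * A) ≤ (Ni - 1) * A :=
    mul_le_mul_of_nonneg_left (by nlinarith) (by linarith)
  nlinarith [k3, k4]

section PW
variable {X Y : Type*} [Fintype X] [Fintype Y]
    {ℓ : ℕ} {Mi : Fin ℓ → Type*} [∀ j, Fintype (Mi j)] [∀ j, DecidableEq (Mi j)]

theorem card_filter_fix (i : ℕ) (d : ∀ j, Mi j) :
    ((Finset.univ.filter (fun m : ∀ j, Mi j => ∀ j : Fin ℓ, (j : ℕ) < i → d j = m j)).card : ℝ)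
      = ∏ j ∈ Finset.univ.filter (fun j : Fin ℓ => ¬ (j : ℕ) < i), (Fintype.card (Mi j) : ℝ) := by
  have hfil : Finset.univ.filter (fun m : ∀ j, Mi j => ∀ j : Fin ℓ, (j : ℕ) < i → d j = m j)
      = Fintype.piFinset (fun j : Fin ℓ => if (j : ℕ) < i then ({d j} : Finset (Mi j)) else Finset.univ) := by
    ext m
    simp only [Finset.mem_filter, Finset.mem_univ, true_and, Fintype.mem_piFinset]
    refine forall_congr' fun j => ?_
    split_ifs with h <;> simp [h, eq_comm]
  rw [hfil, Fintype.card_piFinset, Finset.prod_filter]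
  push_cast
  refine Finset.prod_congr rfl fun j _ => ?_
  split_ifs <;> simp

theorem pointwise (W : X → Y → ℝ) (lam : ℝ) (hlam : 0 < lam)
    (hlow : ∀ x y, lam ≤ W x y) (hmin : ∃ x y, W x y = lam)
    (hrow : ∀ x, ∑ y, W x y = 1)
    (enc : ((j : Fin ℓ) → Mi j) → List Y → X)
    (hcard : ∀ j, 2 ≤ Fintype.card (Mi j))
    (i : ℕ) (d : ∀ j, Mi j) (ys : List Y) :
    ((∏ j ∈ Finset.univ.filter (fun j : Fin ℓ => (j : ℕ) < i), (Fintype.card (Mi j) : ℝ)) - 1)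
        / (∏ j ∈ Finset.univ.filter (fun j : Fin ℓ => (j : ℕ) < i), (Fintype.card (Mi j) : ℝ))
        * (lam / (1 - lam)) ^ ys.length * (∑ m, lik W enc m ys)
      ≤ ∑ m, (if ∀ j : Fin ℓ, (j : ℕ) < i → d j = m j then 0 else lik W enc m ys) := by
  classical
  obtain ⟨x0, y0, hxy⟩ := hmin
  set Nr : ℝ := ∏ j ∈ Finset.univ.filter (fun j : Fin ℓ => (j : ℕ) < i), (Fintype.card (Mi j) : ℝ) with hNr
  set Kr : ℝ := ∏ j ∈ Finset.univ.filter (fun j : Fin ℓ => ¬ (j : ℕ) < i), (Fintype.card (Mi j) : ℝ) with hKr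
  set P : (∀ j, Mi j) → Prop := fun m => ∀ j : Fin ℓ, (j : ℕ) < i → d j = m j with hP
  have hnat : ∀ s : Finset (Fin ℓ), (1:ℝ) ≤ ∏ j ∈ s, (Fintype.card (Mi j) : ℝ) := by
    intro s
    rw [← Nat.cast_prod]
    exact_mod_cast Finset.one_le_prod' (fun j _ => le_trans one_le_two (hcard j))
  have hNi1 : 1 ≤ Nr := by rw [hNr]; exact hnat _
  have hK1 : 1 ≤ Kr := by rw [hKr]; exact hnat _
  have hWle1 : ∀ x y, W x y ≤ 1 := by
    intro x y
    have h := Finset.single_le_sum (f := W x) (fun y' _ => le_trans hlam.le (hlow x y'))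
      (Finset.mem_univ y)
    rwa [hrow x] at h
  have hlam1 : lam ≤ 1 := hxy ▸ hWle1 x0 y0
  -- the sum decomposition
  have hsplit : (∑ m, lik W enc m ys)
      = (∑ m ∈ Finset.univ.filter P, lik W enc m ys)
        + (∑ m ∈ Finset.univ.filter (fun m => ¬ P m), lik W enc m ys) :=
    (Finset.sum_filter_add_sum_filter_not _ _ _).symm
  have herr : (∑ m, (if P m then 0 else lik W enc m ys))
      = ∑ m ∈ Finset.univ.filter (fun m => ¬ P m), lik W enc m ys := by
    rw [Finset.sum_filter]
    exact Finset.sum_congr rfl fun m _ => by by_cases h : P m <;> simp [h]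
  set A : ℝ := ∑ m ∈ Finset.univ.filter (fun m => ¬ P m), lik W enc m ys with hA
  set G : ℝ := ∑ m ∈ Finset.univ.filter P, lik W enc m ys with hG
  have hA0 : 0 ≤ A := Finset.sum_nonneg fun m _ => lik_nonneg hlam.le hlow ys
  have hG0 : 0 ≤ G := Finset.sum_nonneg fun m _ => lik_nonneg hlam.le hlow ys
  -- cardinalities
  have hcP : ((Finset.univ.filter P).card : ℝ) = Kr := card_filter_fix i d
  have hcsum : (Finset.univ.filter P).card + (Finset.univ.filter (fun m => ¬ P m)).card
      = Fintype.card (∀ j, Mi j) := Finset.card_filter_add_card_filter_not _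
  have hNtot : (Fintype.card (∀ j, Mi j) : ℝ) = Nr * Kr := by
    rw [Fintype.card_pi,
      ← Finset.prod_filter_mul_prod_filter_not Finset.univ (fun j : Fin ℓ => (j : ℕ) < i)]
    push_cast
    rfl
  have hcN : ((Finset.univ.filter (fun m => ¬ P m)).card : ℝ) = Nr * Kr - Kr := by
    have := congrArg (fun n : ℕ => (n : ℝ)) hcsum
    push_cast at this
    rw [hcP, hNtot] at this
    linarith
  have h1 : (Nr * Kr - Kr) * lam ^ ys.length ≤ A := by
    have := Finset.card_nsmul_le_sum (Finset.univ.filter (fun m => ¬ P m))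
      (fun m => lik W enc m ys) (lam ^ ys.length)
      (fun m _ => pow_le_lik hlam.le hlow ys)
    rw [nsmul_eq_mul, hcN] at this
    exact this
  rw [hsplit, herr]
  by_cases hl : lam < 1
  · -- main case
    have h2Y : 2 ≤ Fintype.card Y := by
      by_contra h
      push_neg at h
      have hpos : 0 < Fintype.card Y := Fintype.card_pos_iff.mpr ⟨y0⟩
      have hc1 : Fintype.card Y = 1 := by omega
      obtain ⟨y1, hy1⟩ := Fintype.card_eq_one_iff.mp hc1
      have huniv : (Finset.univ : Finset Y) = {y1} := by
        ext z; simp [hy1 z]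
      have := hrow x0
      rw [huniv, Finset.sum_singleton] at this
      rw [hy1 y0, this] at hxy
      linarith
    have hhalf : 2 * lam ≤ 1 := by
      have hs : ∑ _y : Y, lam ≤ ∑ y, W x0 y := Finset.sum_le_sum fun y _ => hlow x0 y
      rw [hrow, Finset.sum_const, Finset.card_univ, nsmul_eq_mul] at hs
      have hc : (2:ℝ) ≤ (Fintype.card Y : ℝ) := by exact_mod_cast h2Y
      linarith [mul_le_mul_of_nonneg_right hc hlam.le]
    have hWub : ∀ x y, W x y ≤ 1 - lam := by
      intro x y
      obtain ⟨y', hy'⟩ := Fintype.exists_ne_of_one_lt_card (by omega) y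
      have hsub : W x y + W x y' ≤ ∑ z, W x z := by
        rw [← Finset.sum_pair hy'.symm]
        exact Finset.sum_le_sum_of_subset_of_nonneg (Finset.subset_univ _)
          (fun z _ _ => le_trans hlam.le (hlow x z))
      rw [hrow] at hsub
      have := hlow x y'
      linarith
    have h2 : G ≤ Kr * (1 - lam) ^ ys.length := by
      have := Finset.sum_le_card_nsmul (Finset.univ.filter P)
        (fun m => lik W enc m ys) ((1 - lam) ^ ys.length)
        (fun m _ => lik_le_pow hlam.le hlow (by linarith) hWub ys)
      rwa [nsmul_eq_mul, hcP] at this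
    have h1l : (0:ℝ) < 1 - lam := by linarith
    have hb : (0:ℝ) < (1 - lam) ^ ys.length := pow_pos h1l _
    have h3 : (lam / (1 - lam)) ^ ys.length * (1 - lam) ^ ys.length = lam ^ ys.length := by
      rw [div_pow, div_mul_cancel₀]
      exact ne_of_gt hb
    have h4 : (lam / (1 - lam)) ^ ys.length ≤ 1 := by
      apply pow_le_one₀ (div_nonneg hlam.le h1l.le)
      rw [div_le_one h1l]
      linarith
    exact alg_aux hNi1 (by linarith) hA0 hG0 h1 h2 h3 h4
      (pow_nonneg (div_nonneg hlam.le h1l.le) _)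
  · -- lam = 1
    have hl1 : lam = 1 := le_antisymm hlam1 (not_lt.mp hl)
    rcases ys with _ | ⟨y, ys'⟩
    · -- empty history: equality case
      have h2 : G ≤ Kr * (1 - lam) ^ (List.length ([] : List Y)) := by
        simp only [List.length_nil, pow_zero, mul_one]
        have := Finset.sum_le_card_nsmul (Finset.univ.filter P)
          (fun m => lik W enc m ([] : List Y)) 1 (fun m _ => by simp [lik])
        rwa [nsmul_eq_mul, hcP, mul_one] at this
      exact alg_aux hNi1 (by linarith) hA0 hG0 h1 h2 (by simp) (by simp) (by simp)
    · -- nonempty history: the factor is zero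
      have : (lam / (1 - lam)) = 0 := by
        rw [hl1]; simp
      rw [this, zero_pow (by simp : (y :: ys').length ≠ 0), mul_zero, zero_mul]
      linarith
end PW


theorem ratio_bounds {X Y : Type*} [Fintype X] [Fintype Y]
    (W : X → Y → ℝ) (lam : ℝ) (hlam : 0 < lam)
    (hlow : ∀ x y, lam ≤ W x y) (hmin : ∃ x y, W x y = lam)
    (hrow : ∀ x, ∑ y, W x y = 1) :
    0 ≤ lam / (1 - lam) ∧ lam / (1 - lam) ≤ 1 := by
  obtain ⟨x0, y0, hxy⟩ := hmin
  have hWle1 : ∀ x y, W x y ≤ 1 := by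
    intro x y
    have h := Finset.single_le_sum (f := W x) (fun y' _ => le_trans hlam.le (hlow x y'))
      (Finset.mem_univ y)
    rwa [hrow x] at h
  have hlam1 : lam ≤ 1 := hxy ▸ hWle1 x0 y0
  rcases eq_or_lt_of_le hlam1 with h | h
  · rw [h]
    norm_num
  · have h2Y : 2 ≤ Fintype.card Y := by
      by_contra hY
      push_neg at hY
      have hpos : 0 < Fintype.card Y := Fintype.card_pos_iff.mpr ⟨y0⟩
      have hc1 : Fintype.card Y = 1 := by omega
      obtain ⟨y1, hy1⟩ := Fintype.card_eq_one_iff.mp hc1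
      have huniv : (Finset.univ : Finset Y) = {y1} := by
        ext z; simp [hy1 z]
      have hr := hrow x0
      rw [huniv, Finset.sum_singleton] at hr
      rw [hy1 y0, hr] at hxy
      linarith
    have hhalf : 2 * lam ≤ 1 := by
      have hs : ∑ _y : Y, lam ≤ ∑ y, W x0 y := Finset.sum_le_sum fun y _ => hlow x0 y
      rw [hrow, Finset.sum_const, Finset.card_univ, nsmul_eq_mul] at hs
      have hc : (2:ℝ) ≤ (Fintype.card Y : ℝ) := by exact_mod_cast h2Y
      linarith [mul_le_mul_of_nonneg_right hc hlam.le]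
    refine ⟨div_nonneg hlam.le (by linarith), ?_⟩
    rw [div_le_one (by linarith)]
    linarith


/-- For a variable-length feedback code with product message set
`M = M₁ × ⋯ × M_ℓ` on a DMC with minimum transition probability `λ > 0` and
`P(τ < ∞) = 1`, the probability `P_e(i)` of decoding the first `i` sub-messages
erroneously satisfies `P_e(i) ≥ ((|M^i|-1)/|M^i|) ⬝ E[(λ/(1-λ))^τ]`, where
`|M^i| = |M₁| ⋯ |M_i|`; consequently every `P_e(i)` is strictly positive. -/
theorem submessage_error_pos {X Y : Type*} [Fintype X] [Fintype Y]
    {ℓ : ℕ} {Mi : Fin ℓ → Type*} [∀ j, Fintype (Mi j)] [∀ j, DecidableEq (Mi j)]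
    (W : X → Y → ℝ) (lam : ℝ) (hlam : 0 < lam)
    (hlow : ∀ x y, lam ≤ W x y) (hmin : ∃ x y, W x y = lam)
    (hrow : ∀ x, ∑ y, W x y = 1)
    (enc : ((j : Fin ℓ) → Mi j) → List Y → X) (S : Set (List Y))
    (dec : List Y → (j : Fin ℓ) → Mi j)
    (hcard : ∀ j, 2 ≤ Fintype.card (Mi j))
    (hanti : ∀ ys ∈ S, ∀ zs ∈ S, ys <:+ zs → ys = zs)
    (hstop : ∑' ys : S, (Fintype.card ((j : Fin ℓ) → Mi j) : ℝ)⁻¹ *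
        ∑ m, lik W enc m (ys : List Y) = 1) :
    ∀ i : ℕ, 1 ≤ i → i ≤ ℓ →
      let Ni : ℝ := ∏ j ∈ Finset.univ.filter (fun j : Fin ℓ => (j : ℕ) < i),
          (Fintype.card (Mi j) : ℝ)
      let Pei : ℝ := ∑' ys : S, (Fintype.card ((j : Fin ℓ) → Mi j) : ℝ)⁻¹ *
          ∑ m, (if ∀ j : Fin ℓ, (j : ℕ) < i → dec (ys : List Y) j = m j then 0
                else lik W enc m (ys : List Y))
      ((Ni - 1) / Ni) *
          (∑' ys : S, (Fintype.card ((j : Fin ℓ) → Mi j) : ℝ)⁻¹ *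
            (∑ m, lik W enc m (ys : List Y)) * (lam / (1 - lam)) ^ (ys : List Y).length)
        ≤ Pei ∧ 0 < Pei := by
  classical
  intro i h1i hiℓ Ni Pei
  have hNi : Ni = ∏ j ∈ Finset.univ.filter (fun j : Fin ℓ => (j : ℕ) < i),
      (Fintype.card (Mi j) : ℝ) := rfl
  have hPei : Pei = ∑' ys : S, (Fintype.card ((j : Fin ℓ) → Mi j) : ℝ)⁻¹ *
      ∑ m, (if ∀ j : Fin ℓ, (j : ℕ) < i → dec (ys : List Y) j = m j then 0
            else lik W enc m (ys : List Y)) := rfl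
  set c : ℝ := (Fintype.card ((j : Fin ℓ) → Mi j) : ℝ)⁻¹ with hc
  haveI hMne : ∀ j, Nonempty (Mi j) := fun j =>
    Fintype.card_pos_iff.mp (by have := hcard j; omega)
  haveI : Nonempty ((j : Fin ℓ) → Mi j) := ⟨fun j => Classical.arbitrary _⟩
  have hcpos : 0 < c := by
    rw [hc]
    exact inv_pos.mpr (by exact_mod_cast Fintype.card_pos)
  -- summability of the stopping distribution
  have hf : Summable (fun ys : S => c * ∑ m, lik W enc m (ys : List Y)) := by
    by_contra h
    rw [tsum_eq_zero_of_not_summable h] at hstop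
    norm_num at hstop
  have hT0 : ∀ ys : List Y, 0 ≤ ∑ m, lik W enc m ys := fun ys =>
    Finset.sum_nonneg fun m _ => lik_nonneg hlam.le hlow ys
  have hf0 : ∀ ys : S, 0 ≤ c * ∑ m, lik W enc m (ys : List Y) := fun ys =>
    mul_nonneg hcpos.le (hT0 _)
  -- error summand
  set g : S → ℝ := fun ys => c *
      ∑ m, (if ∀ j : Fin ℓ, (j : ℕ) < i → dec (ys : List Y) j = m j then 0
            else lik W enc m (ys : List Y)) with hgdef
  have hg0 : ∀ ys : S, 0 ≤ g ys := fun ys => by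
    refine mul_nonneg hcpos.le (Finset.sum_nonneg fun m _ => ?_)
    split_ifs
    · exact le_rfl
    · exact lik_nonneg hlam.le hlow _
  have hgle : ∀ ys : S, g ys ≤ c * ∑ m, lik W enc m (ys : List Y) := fun ys => by
    refine mul_le_mul_of_nonneg_left (Finset.sum_le_sum fun m _ => ?_) hcpos.le
    split_ifs
    · exact lik_nonneg hlam.le hlow _
    · exact le_rfl
  have hg : Summable g := Summable.of_nonneg_of_le hg0 hgle hf
  -- expectation summand
  obtain ⟨hr0, hr1⟩ := ratio_bounds W lam hlam hlow hmin hrow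
  have hrn : ∀ n : ℕ, (lam / (1 - lam)) ^ n ≤ 1 := fun n => pow_le_one₀ hr0 hr1
  set e : S → ℝ := fun ys => c * (∑ m, lik W enc m (ys : List Y)) *
      (lam / (1 - lam)) ^ (ys : List Y).length with hedef
  have he0 : ∀ ys : S, 0 ≤ e ys := fun ys =>
    mul_nonneg (hf0 ys) (pow_nonneg hr0 _)
  have hele : ∀ ys : S, e ys ≤ c * ∑ m, lik W enc m (ys : List Y) := fun ys =>
    mul_le_of_le_one_right (hf0 ys) (hrn _)
  have he : Summable e := Summable.of_nonneg_of_le he0 hele hf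
  constructor
  · rw [hPei, hNi, ← tsum_mul_left]
    refine Summable.tsum_le_tsum (fun ys => ?_) (he.mul_left _) hg
    have hpt := pointwise W lam hlam hlow hmin hrow enc hcard i (dec (ys : List Y))
      (ys : List Y)
    calc ((∏ j ∈ Finset.univ.filter (fun j : Fin ℓ => (j : ℕ) < i),
            (Fintype.card (Mi j) : ℝ)) - 1) /
          (∏ j ∈ Finset.univ.filter (fun j : Fin ℓ => (j : ℕ) < i),
            (Fintype.card (Mi j) : ℝ)) * e ys
        = c * (((∏ j ∈ Finset.univ.filter (fun j : Fin ℓ => (j : ℕ) < i),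
            (Fintype.card (Mi j) : ℝ)) - 1) /
          (∏ j ∈ Finset.univ.filter (fun j : Fin ℓ => (j : ℕ) < i),
            (Fintype.card (Mi j) : ℝ)) * (lam / (1 - lam)) ^ (ys : List Y).length *
            (∑ m, lik W enc m (ys : List Y))) := by
          rw [hedef]; ring
      _ ≤ c * ∑ m, (if ∀ j : Fin ℓ, (j : ℕ) < i → dec (ys : List Y) j = m j then 0
            else lik W enc m (ys : List Y)) :=
          mul_le_mul_of_nonneg_left hpt hcpos.le
      _ = g ys := rfl
  · -- positivity
    haveI hSne : Nonempty S := by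
      by_contra h
      rw [not_nonempty_iff] at h
      rw [tsum_empty] at hstop
      norm_num at hstop
    obtain ⟨ys0⟩ := hSne
    rw [hPei]
    refine Summable.tsum_pos hg hg0 ys0 ?_
    have h0ℓ : 0 < ℓ := lt_of_lt_of_le (by omega) hiℓ
    set j0 : Fin ℓ := ⟨0, h0ℓ⟩ with hj0
    haveI : Nontrivial (Mi j0) := Fintype.one_lt_card_iff_nontrivial.mp
      (by have := hcard j0; omega)
    obtain ⟨x, hx⟩ := exists_ne (dec (ys0 : List Y) j0)
    set m0 : (j : Fin ℓ) → Mi j := Function.update (dec (ys0 : List Y)) j0 x with hm0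
    have hne : ¬ (∀ j : Fin ℓ, (j : ℕ) < i → dec (ys0 : List Y) j = m0 j) := by
      intro h
      have h' := h j0 (by simp [hj0]; omega)
      rw [hm0, Function.update_self] at h'
      exact hx h'.symm
    have hlikpos : 0 < lik W enc m0 (ys0 : List Y) :=
      lt_of_lt_of_le (pow_pos hlam _) (pow_le_lik hlam.le hlow _)
    have hsingle : (if ∀ j : Fin ℓ, (j : ℕ) < i → dec (ys0 : List Y) j = m0 j then 0
          else lik W enc m0 (ys0 : List Y))
        ≤ ∑ m, (if ∀ j : Fin ℓ, (j : ℕ) < i → dec (ys0 : List Y) j = m j then 0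
            else lik W enc m (ys0 : List Y)) := by
      refine Finset.single_le_sum
        (f := fun m => if ∀ j : Fin ℓ, (j : ℕ) < i → dec (ys0 : List Y) j = m j then 0
          else lik W enc m (ys0 : List Y)) (fun m _ => ?_) (Finset.mem_univ m0)
      split_ifs
      · exact le_rfl
      · exact lik_nonneg hlam.le hlow _
    rw [if_neg hne] at hsingle
    exact mul_pos hcpos (lt_of_lt_of_le hlikpos hsingle)

end
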